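/- arXiv:1808.04873 — 5 statements merged into one kernel-verified Lean document; each statement's English description precedes it below -/
import Mathlib

section
/- With the setting of the previous statement, additionally define the augmented vector field μ^β(θ, s) = μ(θ, s) − β · ∇_s C(θ, s) and suppose s^β(θ) is differentiable in (θ, β) with μ^β(θ, s^β(θ)) = 0 and s^0(θ) = s⁰(θ). Define ν(θ) = −∂C/∂θ(θ, s⁰(θ)) + (∂μ/∂θ(θ, s⁰(θ)))ᵀ · (∂s^β/∂β)|_{β=0}. Then ν(θ) = −∂C/∂θ(θ, s⁰(θ)) + ∂C/∂s(θ, s⁰(θ)) · ((∂μ/∂s(θ, s⁰(θ)))ᵀ)⁻¹ · ∂μ/∂θ(θ, s⁰(θ)). -/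
open Matrix

/-- Theorem 1 (Eq. 31): explicit formula for the Equilibrium Propagation update
vector field `ν`.  Here `ν(θ)` is defined, as a function of a direction `θ'` in
parameter space via the dual pairing, by
`ν(θ) = −∂C/∂θ(θ, s⁰(θ)) + (∂μ/∂θ)ᵀ · (∂s^β/∂β)|_{β=0}`, and the claim is that it
equals `−∂C/∂θ + ∂C/∂s · ((∂μ/∂s)ᵀ)⁻¹ · ∂μ/∂θ`, everything evaluated at the free
fixed point `s⁰(θ)`.  `JT` is the transpose of the Jacobian `J = ∂μ/∂s(θ, s⁰(θ))`. -/
theorem stmt_3 {n p : ℕ}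
    (μ : (Fin p → ℝ) → (Fin n → ℝ) → (Fin n → ℝ))
    (C : (Fin p → ℝ) → (Fin n → ℝ) → ℝ)
    (hμ : ContDiff ℝ 1 (fun q : (Fin p → ℝ) × (Fin n → ℝ) => μ q.1 q.2))
    (hC : ContDiff ℝ 1 (fun q : (Fin p → ℝ) × (Fin n → ℝ) => C q.1 q.2))
    (s0 : (Fin p → ℝ) → (Fin n → ℝ))
    (hs0 : Differentiable ℝ s0)
    (hfix : ∀ θ, μ θ (s0 θ) = 0)
    (θ : Fin p → ℝ)
    (J : (Fin n → ℝ) ≃L[ℝ] (Fin n → ℝ))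
    (hJ : (J : (Fin n → ℝ) →L[ℝ] (Fin n → ℝ)) = fderiv ℝ (fun s => μ θ s) (s0 θ))
    (JT : (Fin n → ℝ) ≃L[ℝ] (Fin n → ℝ))
    (hJT : ∀ u w, JT u ⬝ᵥ w = u ⬝ᵥ J w)
    -- the fixed points `s^β(θ)` of the augmented vector field
    -- `μ^β(θ,s) = μ(θ,s) − β ∇_s C(θ,s)`
    (sβ : ℝ → (Fin p → ℝ) → (Fin n → ℝ))
    (hsβ : Differentiable ℝ (fun q : ℝ × (Fin p → ℝ) => sβ q.1 q.2))
    (hsβfix : ∀ β θ', μ θ' (sβ β θ') =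
      β • (fun i => fderiv ℝ (fun s => C θ' s) (sβ β θ') (Pi.single i 1)))
    (hsβ0 : sβ 0 = s0) :
    ∀ θ' : Fin p → ℝ,
      -(fderiv ℝ (fun θ'' => C θ'' (s0 θ)) θ θ') +
          (fderiv ℝ (fun θ'' => μ θ'' (s0 θ)) θ θ') ⬝ᵥ (deriv (fun β => sβ β θ) 0)
        =
      -(fderiv ℝ (fun θ'' => C θ'' (s0 θ)) θ θ') +
          fderiv ℝ (fun s => C θ s) (s0 θ)
            (JT.symm (fderiv ℝ (fun θ'' => μ θ'' (s0 θ)) θ θ')) := by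

  intro θ'
  congr 1
  have hσdiff : Differentiable ℝ (fun β : ℝ => sβ β θ) :=
    hsβ.comp (differentiable_id.prodMk (differentiable_const θ))
  have hσ0 : sβ 0 θ = s0 θ := by rw [hsβ0]
  have hμθ : ContDiff ℝ 1 (fun s => μ θ s) :=
    hμ.comp (contDiff_const.prodMk contDiff_id)
  have hCθ : ContDiff ℝ 1 (fun s => C θ s) :=
    hC.comp (contDiff_const.prodMk contDiff_id)
  set g : ℝ → (Fin n → ℝ) :=
    fun β => fun i => fderiv ℝ (fun s => C θ s) (sβ β θ) (Pi.single i 1) with hgdef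
  have hgcont : Continuous g := by
    have h1 : Continuous fun β : ℝ => fderiv ℝ (fun s => C θ s) (sβ β θ) :=
      (hCθ.continuous_fderiv one_ne_zero).comp hσdiff.continuous
    exact continuous_pi fun i => h1.clm_apply continuous_const
  have hfix0 : (fun β : ℝ => μ θ (sβ β θ)) = fun β => β • g β := by
    funext β; exact hsβfix β θ
  have hσd : HasDerivAt (fun β : ℝ => sβ β θ) (deriv (fun β => sβ β θ) 0) 0 :=
    (hσdiff 0).hasDerivAt
  have hμd : HasFDerivAt (fun s => μ θ s) (fderiv ℝ (fun s => μ θ s) (s0 θ)) (sβ 0 θ) := by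
    rw [hσ0]; exact (hμθ.differentiable one_ne_zero (s0 θ)).hasFDerivAt
  have hchain : HasDerivAt (fun β => μ θ (sβ β θ))
      (fderiv ℝ (fun s => μ θ s) (s0 θ) (deriv (fun β => sβ β θ) 0)) 0 :=
    hμd.comp_hasDerivAt 0 hσd
  have hsmul : HasDerivAt (fun β : ℝ => β • g β) (g 0) 0 := by
    rw [hasDerivAt_iff_isLittleO]
    simp only [zero_smul, sub_zero]
    have heq : (fun β : ℝ => β • g β - β • g 0)
        = fun β : ℝ => β • (g β - g 0) := by
      funext β; rw [smul_sub]
    rw [heq]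
    have h0 : Filter.Tendsto (fun β : ℝ => g β - g 0) (nhds 0) (nhds 0) := by
      simpa using (hgcont.tendsto 0).sub (tendsto_const_nhds (x := g 0))
    have hlo : (fun β : ℝ => g β - g 0) =o[nhds 0] (fun _ : ℝ => (1 : ℝ)) :=
      Asymptotics.isLittleO_one_iff ℝ |>.mpr h0
    have hbo := (Asymptotics.isBigO_refl (fun β : ℝ => β) (nhds 0)).smul_isLittleO hlo
    simpa using hbo
  have hkey : fderiv ℝ (fun s => μ θ s) (s0 θ) (deriv (fun β => sβ β θ) 0) = g 0 := by
    have h1 : HasDerivAt (fun β : ℝ => β • g β)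
        (fderiv ℝ (fun s => μ θ s) (s0 θ) (deriv (fun β => sβ β θ) 0)) 0 := by
      rw [← hfix0]; exact hchain
    exact h1.unique hsmul
  have hJs : J (deriv (fun β => sβ β θ) 0) = g 0 := by
    rw [← hkey, ← hJ]; rfl
  have hg0 : g 0 = fun i => fderiv ℝ (fun s => C θ s) (s0 θ) (Pi.single i 1) := by
    simp only [hgdef, hσ0]
  have hLw : ∀ w : Fin n → ℝ, fderiv ℝ (fun s => C θ s) (s0 θ) w
      = w ⬝ᵥ fun i => fderiv ℝ (fun s => C θ s) (s0 θ) (Pi.single i 1) := by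
    intro w
    have hw : w = ∑ i, w i • (Pi.single i 1 : Fin n → ℝ) := by
      funext j
      simp [Finset.sum_apply, Pi.single_apply]
    conv_lhs => rw [hw]
    rw [map_sum]
    simp [dotProduct, _root_.map_smul, smul_eq_mul]
  set v := fderiv ℝ (fun θ'' => μ θ'' (s0 θ)) θ θ' with hvdef
  calc v ⬝ᵥ deriv (fun β => sβ β θ) 0
      = JT (JT.symm v) ⬝ᵥ deriv (fun β => sβ β θ) 0 := by rw [JT.apply_symm_apply]
    _ = (JT.symm v) ⬝ᵥ J (deriv (fun β => sβ β θ) 0) := hJT _ _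
    _ = (JT.symm v) ⬝ᵥ g 0 := by rw [hJs]
    _ = fderiv ℝ (fun s => C θ s) (s0 θ) (JT.symm v) := by rw [hg0, ← hLw]
end

section
/- Let μ : ℝⁿ → ℝⁿ and C : ℝⁿ → ℝ be continuously differentiable, let μ^β(s) = μ(s) − β ∇C(s), and let β ↦ s^β be a differentiable curve of fixed points (μ^β(s^β) = 0) such that the Jacobian ∂μ^β/∂s(s^β) is negative semidefinite at β = 0 (stability). Then the derivative of β ↦ C(s^β) at β = 0 is non-positive. -/
open Matrix

/-- Nudging towards low-cost configurations: along a differentiable curve `β ↦ s^β`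
of fixed points of the augmented field `μ^β = μ − β∇C`, if the Jacobian of `μ` at
`s⁰` is negative semidefinite then `d/dβ C(s^β) ≤ 0` at `β = 0`. -/
theorem stmt_7 {n : ℕ}
    (μ : (Fin n → ℝ) → (Fin n → ℝ))
    (C : (Fin n → ℝ) → ℝ)
    (hμ : ContDiff ℝ 1 μ)
    (hC : ContDiff ℝ 1 C)
    (s : ℝ → (Fin n → ℝ))
    (hs : Differentiable ℝ s)
    -- `μ^β(s^β) = 0`, i.e. `μ(s^β) = β ∇C(s^β)`
    (hfix : ∀ β, μ (s β) = β • (fun i => fderiv ℝ C (s β) (Pi.single i 1)))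
    -- stability: the Jacobian `∂μ^β/∂s(s^β)` at `β = 0` is negative semidefinite
    (hstab : ∀ v : Fin n → ℝ, v ⬝ᵥ (fderiv ℝ μ (s 0) v) ≤ 0) :
    deriv (fun β => C (s β)) 0 ≤ 0 := by
  set g : ℝ → (Fin n → ℝ) := fun β i => fderiv ℝ C (s β) (Pi.single i 1) with hg
  have hCd : Differentiable ℝ C := hC.differentiable one_ne_zero
  have hμd : Differentiable ℝ μ := hμ.differentiable one_ne_zero
  have hfC : Continuous (fun x => fderiv ℝ C x) := hC.continuous_fderiv one_ne_zero
  have hgc : Continuous g := by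
    apply continuous_pi
    intro i
    exact (isBoundedBilinearMap_apply.continuous.comp
      ((hfC.comp hs.continuous).prodMk continuous_const))
  -- derivative of β ↦ β • g β at 0 is g 0
  have h1 : HasDerivAt (fun β => β • g β) (g 0) 0 := by
    rw [hasDerivAt_iff_tendsto_slope]
    have heq : ∀ᶠ x in nhdsWithin 0 {(0:ℝ)}ᶜ, g x = slope (fun β => β • g β) 0 x := by
      filter_upwards [self_mem_nhdsWithin] with x hx
      have hx0 : (x : ℝ) ≠ 0 := hx
      simp only [slope_def_field, slope, vsub_eq_sub, sub_zero, zero_smul, sub_zero]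
      rw [smul_smul, inv_mul_cancel₀ hx0, one_smul]
    exact Filter.Tendsto.congr' heq
      ((hgc.continuousAt).tendsto.mono_left nhdsWithin_le_nhds)
  have h2 : HasDerivAt (fun β => μ (s β)) (fderiv ℝ μ (s 0) (deriv s 0)) 0 :=
    (hμd (s 0)).hasFDerivAt.comp_hasDerivAt 0 (hs 0).hasDerivAt
  have hfun : (fun β => μ (s β)) = fun β => β • g β := funext hfix
  have hkey : fderiv ℝ μ (s 0) (deriv s 0) = g 0 := by
    rw [hfun] at h2
    exact h2.unique h1
  -- expand fderiv C (s 0) v as dot product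
  have hlin : ∀ v : Fin n → ℝ, fderiv ℝ C (s 0) v = v ⬝ᵥ g 0 := by
    intro v
    have hv : v = ∑ i, Pi.single i (v i) := (Finset.univ_sum_single v).symm
    rw [dotProduct]
    conv_lhs => rw [hv]
    rw [map_sum]
    refine Finset.sum_congr rfl fun i _ => ?_
    have : Pi.single i (v i) = (v i) • (Pi.single i 1 : Fin n → ℝ) := by
      rw [← Pi.single_smul, smul_eq_mul, mul_one]
    rw [this, _root_.map_smul]
    rfl
  have h3 : deriv (fun β => C (s β)) 0 = fderiv ℝ C (s 0) (deriv s 0) :=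
    ((hCd (s 0)).hasFDerivAt.comp_hasDerivAt 0 (hs 0).hasDerivAt).deriv
  rw [h3, hlin, ← hkey]
  exact hstab (deriv s 0)
end

section
/- Let μ : ℝⁿ → ℝⁿ be continuously differentiable with flow S(s, t) (i.e. ∂S/∂t(s,t) = μ(S(s,t)), S(s,0) = s), let C : ℝⁿ → ℝ be continuously differentiable, and define L(s, t) = C(S(s, t)). Then for all s and t, ∂L/∂t(s, t) = ∇_s L(s, t) · μ(s). -/
open Set Filter Topology

/-- Global uniqueness of solutions of an autonomous ODE with `C¹` vector field. -/
lemma flow_unique {E : Type*} [NormedAddCommGroup E] [NormedSpace ℝ E] {μ : E → E}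
    (hμ : ContDiff ℝ 1 μ) {f g : ℝ → E}
    (hf : ∀ t, HasDerivAt f (μ (f t)) t) (hg : ∀ t, HasDerivAt g (μ (g t)) t)
    {t₀ : ℝ} (h0 : f t₀ = g t₀) : f = g := by
  have hset : {t | f t = g t} = Set.univ := by
    apply IsClopen.eq_univ
    · constructor
      · exact isClosed_eq (continuous_iff_continuousAt.2 fun t => (hf t).continuousAt)
          (continuous_iff_continuousAt.2 fun t => (hg t).continuousAt)
      · rw [isOpen_iff_mem_nhds]
        intro t₁ ht₁
        obtain ⟨K, u, hu, hK⟩ := (hμ.contDiffAt (x := f t₁)).exists_lipschitzOnWith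
        have hfu : ∀ᶠ t in 𝓝 t₁, HasDerivAt f (μ (f t)) t ∧ f t ∈ u := by
          filter_upwards [(hf t₁).continuousAt.eventually_mem hu] with t ht
          exact ⟨hf t, ht⟩
        have hgu : ∀ᶠ t in 𝓝 t₁, HasDerivAt g (μ (g t)) t ∧ g t ∈ u := by
          have hu' : u ∈ 𝓝 (g t₁) := by rwa [← ht₁]
          filter_upwards [(hg t₁).continuousAt.eventually_mem hu'] with t ht
          exact ⟨hg t, ht⟩
        exact ODE_solution_unique_of_eventually
          (v := fun _ => μ) (s := fun _ => u) (Filter.Eventually.of_forall fun _ => hK) hfu hgu ht₁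
    · exact ⟨t₀, h0⟩
  funext t
  have : t ∈ {t | f t = g t} := by rw [hset]; trivial
  exact this

/-- Kolmogorov backward equation for the projected cost along a deterministic flow:
if `L(s, t) = C(S(s, t))` where `S` is the flow of `μ`, then
`∂L/∂t(s, t) = ∇_s L(s, t) · μ(s)`. -/
theorem stmt_11 {n : ℕ}
    (μ : (Fin n → ℝ) → (Fin n → ℝ))
    (hμ : ContDiff ℝ 1 μ)
    (C : (Fin n → ℝ) → ℝ)
    (hC : ContDiff ℝ 1 C)
    (S : (Fin n → ℝ) → ℝ → (Fin n → ℝ))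
    (hSsmooth : ContDiff ℝ 1 (fun q : (Fin n → ℝ) × ℝ => S q.1 q.2))
    (hS0 : ∀ s, S s 0 = s)
    (hflow : ∀ s t, HasDerivAt (S s) (μ (S s t)) t)
    (L : (Fin n → ℝ) → ℝ → ℝ)
    (hL : ∀ s t, L s t = C (S s t)) :
    ∀ s t, deriv (fun t' => L s t') t = fderiv ℝ (fun s' => L s' t) s (μ s) := by
  intro s t
  -- semigroup property
  have hsemi : ∀ u t', S (S s u) t' = S s (u + t') := by
    intro u t'
    have h := flow_unique hμ (f := S (S s u)) (g := fun t' => S s (u + t'))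
      (fun t' => hflow _ t')
      (fun t' => by
        have h1 : HasDerivAt (fun t' : ℝ => u + t') 1 t' := (hasDerivAt_id t').const_add u
        have := (hflow s (u + t')).scomp t' h1
        rw [one_smul] at this; exact this)
      (t₀ := 0) (by simp [hS0])
    exact congrFun h t'
  -- differentiability facts
  have hCd : Differentiable ℝ C := hC.differentiable one_ne_zero
  have hSt : Differentiable ℝ (fun s' : Fin n → ℝ => S s' t) :=
    (hSsmooth.differentiable one_ne_zero).comp (differentiable_id.prodMk (differentiable_const t))
  set F : (Fin n → ℝ) → ℝ := fun s' => C (S s' t) with hF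
  have hFd : Differentiable ℝ F := hCd.comp hSt
  -- φ u = F (S s u) = C (S s (u + t)) = L s (u + t)
  -- derivative of φ at 0, via the spatial chain rule:
  have h1 : HasDerivAt (fun u => F (S s u)) ((fderiv ℝ F s) (μ s)) 0 := by
    have := (hFd (S s 0)).hasFDerivAt.comp_hasDerivAt 0 (hflow s 0)
    rwa [hS0 s] at this
  -- derivative of φ at 0, via the time chain rule:
  have h2 : HasDerivAt (fun u => F (S s u)) ((fderiv ℝ C (S s t)) (μ (S s t))) 0 := by
    have heq : (fun u => F (S s u)) = fun u => C (S s (u + t)) := by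
      funext u; rw [hF]; simp [hsemi]
    rw [heq]
    have h1' : HasDerivAt (fun u : ℝ => u + t) 1 0 := (hasDerivAt_id 0).add_const t
    have hS' := (hflow s (0 + t)).scomp 0 h1'
    have := (hCd (S s (0 + t))).hasFDerivAt.comp_hasDerivAt 0 hS'
    simp at this; exact this
  have key : (fderiv ℝ F s) (μ s) = (fderiv ℝ C (S s t)) (μ (S s t)) := h1.unique h2
  -- compute both sides
  have hLfun : (fun t' => L s t') = fun t' => C (S s t') := funext fun t' => hL s t'
  have hLs : (fun s' => L s' t) = F := funext fun s' => hL s' t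
  rw [hLfun, hLs, key]
  exact ((hCd (S s t)).hasFDerivAt.comp_hasDerivAt t (hflow s t)).deriv
end

section
/- In the setting of the previous statement, assume L is C². Let s⁰ be a point with μ(s⁰) = 0. Then the map t ↦ ∇_s L(s⁰, t) satisfies the linear ODE d/dt ∇_s L(s⁰, t) = (∂μ/∂s(s⁰))ᵀ · ∇_s L(s⁰, t), with initial condition ∇_s L(s⁰, 0) = ∇C(s⁰). -/
open Set Filter Topology Matrix

lemma ode_unique_global {E : Type*} [NormedAddCommGroup E] [NormedSpace ℝ E]
    {μ : E → E} (hμ : ContDiff ℝ 1 μ) {y z : ℝ → E}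
    (hy : ∀ t, HasDerivAt y (μ (y t)) t) (hz : ∀ t, HasDerivAt z (μ (z t)) t)
    (h0 : y 0 = z 0) : y = z := by
  have hyc : Continuous y := continuous_iff_continuousAt.2 fun t => (hy t).continuousAt
  have hzc : Continuous z := continuous_iff_continuousAt.2 fun t => (hz t).continuousAt
  have hT : IsClosed {t | y t = z t} := isClosed_eq hyc hzc
  have hO : IsOpen {t | y t = z t} := by
    rw [isOpen_iff_mem_nhds]
    intro t ht
    obtain ⟨K, u, hu, hlip⟩ := (hμ.contDiffAt (x := y t)).exists_lipschitzOnWith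
    have hu' : u ∈ nhds (z t) := ht ▸ hu
    have hev : y =ᶠ[nhds t] z := by
      refine ODE_solution_unique_of_eventually (v := fun _ => μ) (s := fun _ => u)
        (Filter.Eventually.of_forall fun _ => hlip) ?_ ?_ ht
      · filter_upwards [hyc.continuousAt.preimage_mem_nhds hu] with t' ht'
        exact ⟨hy t', ht'⟩
      · filter_upwards [hzc.continuousAt.preimage_mem_nhds hu'] with t' ht'
        exact ⟨hz t', ht'⟩
    exact hev
  have : {t | y t = z t} = univ := IsClopen.eq_univ ⟨hT, hO⟩ ⟨0, h0⟩
  funext t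
  exact (this ▸ mem_univ t : t ∈ {t | y t = z t})

/-- Key step of Theorem 2 (Recurrent Backpropagation): at a fixed point `s⁰` of `μ`,
the gradient `∇_s L(s⁰, t)` of the projected cost satisfies the linear ODE
`d/dt ∇_s L(s⁰, t) = (∂μ/∂s(s⁰))ᵀ ∇_s L(s⁰, t)` with initial condition `∇C(s⁰)`. -/
theorem stmt_12 {n : ℕ}
    (μ : (Fin n → ℝ) → (Fin n → ℝ))
    (hμ : ContDiff ℝ 1 μ)
    (C : (Fin n → ℝ) → ℝ)
    (hC : ContDiff ℝ 1 C)
    (S : (Fin n → ℝ) → ℝ → (Fin n → ℝ))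
    (hSsmooth : ContDiff ℝ 1 (fun q : (Fin n → ℝ) × ℝ => S q.1 q.2))
    (hS0 : ∀ s, S s 0 = s)
    (hflow : ∀ s t, HasDerivAt (S s) (μ (S s t)) t)
    (L : (Fin n → ℝ) → ℝ → ℝ)
    (hL : ∀ s t, L s t = C (S s t))
    (hL2 : ContDiff ℝ 2 (fun q : (Fin n → ℝ) × ℝ => L q.1 q.2))
    (s0 : Fin n → ℝ)
    (hfix : μ s0 = 0) :
    -- `g t = ∇_s L(s⁰, t)`
    (fun i => fderiv ℝ (fun s' => L s' 0) s0 (Pi.single i 1))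
        = (fun i => fderiv ℝ C s0 (Pi.single i 1)) ∧
    ∀ t, HasDerivAt (fun t' => (fun i => fderiv ℝ (fun s' => L s' t') s0 (Pi.single i 1)))
      ((Matrix.of fun i j => fderiv ℝ μ s0 (Pi.single j 1) i)ᵀ.mulVec
        (fun i => fderiv ℝ (fun s' => L s' t) s0 (Pi.single i 1))) t := by
  have hinit : (fun s' => L s' 0) = C := by funext s'; rw [hL, hS0]
  refine ⟨by rw [hinit], ?_⟩
  set f : (Fin n → ℝ) × ℝ → ℝ := fun q => L q.1 q.2 with hf_def
  have hLd : Differentiable ℝ f := hL2.differentiable two_ne_zero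
  have hDf : ContDiff ℝ 1 (fderiv ℝ f) := hL2.fderiv_right (by norm_num)
  -- semigroup property
  have hsemi : ∀ s h t, S (S s h) t = S s (t + h) := by
    intro s h t
    have heq := ode_unique_global hμ (y := S (S s h)) (z := fun t => S s (t + h))
      (fun t => hflow _ t) (fun t => (hflow s (t + h)).comp_add_const t h)
      (by simp [hS0])
    exact congrFun heq t
  -- the one-sided injections
  set J : (Fin n → ℝ) →L[ℝ] (Fin n → ℝ) × ℝ :=
    (ContinuousLinearMap.id ℝ (Fin n → ℝ)).prod 0 with hJ_def
  have hJ : ∀ v, J v = (v, 0) := fun v => rfl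
  -- fderiv of L(·,t) as partial fderiv of f
  have hfS : ∀ (s : Fin n → ℝ) (t : ℝ), HasFDerivAt (fun s' => L s' t)
      ((fderiv ℝ f (s, t)).comp J) s := fun s t => by
    have h := (hLd (s, t)).hasFDerivAt.comp s
      (HasFDerivAt.prodMk (hasFDerivAt_id (𝕜 := ℝ) s) (hasFDerivAt_const t s))
    exact h
  have hpart : ∀ (s : Fin n → ℝ) (t : ℝ) (v : Fin n → ℝ),
      fderiv ℝ (fun s' => L s' t) s v = fderiv ℝ f (s, t) (v, 0) := by
    intro s t v
    rw [(hfS s t).fderiv]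
    rfl
  -- time derivative of L s
  have hft : ∀ (s : Fin n → ℝ) (t : ℝ),
      HasDerivAt (fun t' => L s t') (fderiv ℝ f (s, t) (0, 1)) t := by
    intro s t
    have := (hLd (s, t)).hasFDerivAt.comp_hasDerivAt t
      (HasDerivAt.prodMk (hasDerivAt_const t s) (hasDerivAt_id t))
    simpa [Function.comp_def] using this
  -- key identity : ∂_t L(s,t) = ∂_s L(s,t) [μ s]
  have key1 : ∀ (s : Fin n → ℝ) (t : ℝ),
      fderiv ℝ f (s, t) (0, 1) = fderiv ℝ f (s, t) (μ s, 0) := by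
    intro s t
    have h2 : HasDerivAt (fun h => L s (t + h)) (fderiv ℝ f (s, t) (0, 1)) 0 :=
      HasDerivAt.comp_const_add t 0 (by simpa using hft s t)
    have hc : HasFDerivAt (fun s' => L s' t) ((fderiv ℝ f (s, t)).comp J) (S s 0) := by
      rw [hS0]; exact hfS s t
    have hflow0 : HasDerivAt (S s) (μ s) 0 := by simpa [hS0] using hflow s 0
    have h1 : HasDerivAt (fun h => L (S s h) t) (fderiv ℝ f (s, t) (μ s, 0)) 0 := by
      simpa [Function.comp_def, hJ] using hc.comp_hasDerivAt 0 hflow0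
    have hfun : (fun h => L s (t + h)) = fun h => L (S s h) t := by
      funext h
      rw [hL, hL, hsemi]
    rw [hfun] at h2
    exact h2.unique h1
  intro t
  refine hasDerivAt_pi.2 fun i => ?_
  -- rewrite everything in terms of `fderiv ℝ f`
  simp only [hpart]
  set B := fderiv ℝ (fderiv ℝ f) (s0, t) with hB_def
  have hBt : HasDerivAt (fun t' => fderiv ℝ f (s0, t')) (B (0, 1)) t := by
    have := (hDf.differentiable one_ne_zero (s0, t)).hasFDerivAt.comp_hasDerivAt t
      (HasDerivAt.prodMk (hasDerivAt_const t s0) (hasDerivAt_id t))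
    simpa [Function.comp_def] using this
  have hgi : HasDerivAt (fun t' => fderiv ℝ f (s0, t') (Pi.single i 1, 0))
      (B (0, 1) (Pi.single i 1, 0)) t := by
    simpa using hBt.clm_apply (hasDerivAt_const t ((Pi.single i 1 : Fin n → ℝ), (0 : ℝ)))
  -- it remains to identify the derivative value
  have hval : B (0, 1) (Pi.single i 1, 0)
      = (Matrix.of fun i j => fderiv ℝ μ s0 (Pi.single j 1) i)ᵀ.mulVec
        (fun j => fderiv ℝ f (s0, t) (Pi.single j 1, 0)) i := by
    -- symmetry of the second derivative
    have hsymm : B (0, 1) (Pi.single i 1, 0) = B (Pi.single i 1, 0) (0, 1) :=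
      (hL2.contDiffAt.isSymmSndFDerivAt (by simp)) _ _
    -- fderiv in s of s ↦ fderiv f (s,t)
    have hB2 : HasFDerivAt (fun s => fderiv ℝ f (s, t)) (B.comp J) s0 :=
      (hDf.differentiable one_ne_zero (s0, t)).hasFDerivAt.comp s0
        (HasFDerivAt.prodMk (hasFDerivAt_id (𝕜 := ℝ) s0) (hasFDerivAt_const t s0))
    have hA : HasFDerivAt (fun s => fderiv ℝ f (s, t) (0, 1))
        ((B.comp J).flip (0, 1)) s0 := by
      simpa using hB2.clm_apply (hasFDerivAt_const ((0 : Fin n → ℝ), (1 : ℝ)) s0)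
    -- fderiv in s of s ↦ fderiv f (s,t) (μ s, 0)
    have hμd : HasFDerivAt μ (fderiv ℝ μ s0) s0 := (hμ.differentiable one_ne_zero s0).hasFDerivAt
    have hud : HasFDerivAt (fun s => ((μ s, (0 : ℝ)) : (Fin n → ℝ) × ℝ))
        ((fderiv ℝ μ s0).prod 0) s0 := hμd.prodMk (hasFDerivAt_const 0 s0)
    have hA2 : HasFDerivAt (fun s => fderiv ℝ f (s, t) (μ s, 0))
        ((fderiv ℝ f (s0, t)).comp ((fderiv ℝ μ s0).prod 0) +
          (B.comp J).flip (μ s0, 0)) s0 := hB2.clm_apply hud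
    have hfeq : (fun s => fderiv ℝ f (s, t) (0, 1)) = fun s => fderiv ℝ f (s, t) (μ s, 0) := by
      funext s
      exact key1 s t
    have hder : ((B.comp J).flip ((0 : Fin n → ℝ), (1 : ℝ)))
        = (fderiv ℝ f (s0, t)).comp ((fderiv ℝ μ s0).prod 0) +
          (B.comp J).flip (μ s0, 0) := by
      apply HasFDerivAt.unique hA
      rw [hfeq]
      exact hA2
    have happ := congrFun (congrArg (fun (T : (Fin n → ℝ) →L[ℝ] ℝ) => (T : (Fin n → ℝ) → ℝ))
      hder) (Pi.single i 1)
    simp only [ContinuousLinearMap.flip_apply, ContinuousLinearMap.comp_apply,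
      ContinuousLinearMap.add_apply, ContinuousLinearMap.prod_apply,
      ContinuousLinearMap.zero_apply, hfix] at happ
    -- happ : B (J (Pi.single i 1)) (0,1) = fderiv f (s0,t) (fderiv μ s0 (single i 1), 0) + B (J e_i) (0, 0)
    have hzero : B (J (Pi.single i 1)) ((0 : Fin n → ℝ), (0 : ℝ)) = 0 := by
      rw [show ((0 : Fin n → ℝ), (0 : ℝ)) = (0 : (Fin n → ℝ) × ℝ) from rfl, map_zero]
    rw [hzero, add_zero] at happ
    -- decomposition of directional derivative into coordinates
    have hdec : ∀ w : Fin n → ℝ, fderiv ℝ f (s0, t) (w, 0)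
        = ∑ j, w j * fderiv ℝ f (s0, t) (Pi.single j 1, 0) := by
      intro w
      have hw : ((w, (0 : ℝ)) : (Fin n → ℝ) × ℝ)
          = ∑ j, w j • ((Pi.single j 1 : Fin n → ℝ), (0 : ℝ)) := by
        rw [Prod.ext_iff]
        constructor
        · simp only [Prod.fst_sum, Prod.smul_mk]
          funext k
          simp [Finset.sum_apply, Pi.single_apply]
        · simp [Prod.snd_sum, Prod.smul_mk]
      rw [hw, map_sum]
      refine Finset.sum_congr rfl fun j _ => ?_
      rw [_root_.map_smul, smul_eq_mul]
    calc (B (0, 1)) (Pi.single i 1, 0)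
        = (B (Pi.single i 1, 0)) (0, 1) := hsymm
      _ = fderiv ℝ f (s0, t) (fderiv ℝ μ s0 (Pi.single i 1), 0) := happ
      _ = ∑ j, fderiv ℝ μ s0 (Pi.single i 1) j * fderiv ℝ f (s0, t) (Pi.single j 1, 0) :=
          hdec _
      _ = (Matrix.of fun i j => fderiv ℝ μ s0 (Pi.single j 1) i)ᵀ.mulVec
            (fun j => fderiv ℝ f (s0, t) (Pi.single j 1, 0)) i := by
          simp [Matrix.mulVec, dotProduct]
  exact hval ▸ hgi
end

section
/- In the setting of the previous statement, define S̃(t) := − (d/dt) v(t) where v(t) = (∂S^β/∂β)|_{β=0}(s⁰, t). Then S̃ satisfies S̃(0) = ∇C(s⁰) and dS̃/dt = ∂μ/∂s(s⁰) · S̃(t). -/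
open Set


/-- Theorem 3 (temporal derivatives in Equilibrium Propagation): with
`v(t) = (∂S^β/∂β)|_{β=0}(s⁰, t)`, the rescaled temporal derivative
`S̃(t) = −dv/dt(t)` satisfies `S̃(0) = ∇C(s⁰)` and `dS̃/dt = ∂μ/∂s(s⁰) · S̃(t)`. -/
theorem stmt_14 {n : ℕ}
    (μ : (Fin n → ℝ) → (Fin n → ℝ))
    (hμ : ContDiff ℝ 1 μ)
    (C : (Fin n → ℝ) → ℝ)
    (hC : ContDiff ℝ 2 C)
    (s0 : Fin n → ℝ)
    (hfix : μ s0 = 0)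
    (S : ℝ → (Fin n → ℝ) → ℝ → (Fin n → ℝ))
    (hS0 : ∀ β s, S β s 0 = s)
    (hflow : ∀ β t, HasDerivAt (S β s0)
      (μ (S β s0 t) - β • (fun i => fderiv ℝ C (S β s0 t) (Pi.single i 1))) t)
    (hSsmooth : ContDiff ℝ 2 (fun q : ℝ × ℝ => S q.1 s0 q.2)) :
    -- `S̃ t = −(d/dt) v(t)` where `v t = (∂S^β/∂β)|_{β=0}(s⁰, t)`
    (-(deriv (fun t' => deriv (fun β => S β s0 t') 0) 0)
        = (fun i => fderiv ℝ C s0 (Pi.single i 1))) ∧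
    ∀ t, HasDerivAt (fun t' => -(deriv (fun t'' => deriv (fun β => S β s0 t'') 0) t'))
      (fderiv ℝ μ s0 (-(deriv (fun t'' => deriv (fun β => S β s0 t'') 0) t))) t := by
  set g : (Fin n → ℝ) → (Fin n → ℝ) := fun x i => fderiv ℝ C x (Pi.single i 1) with hgdef
  set F : ℝ × ℝ → (Fin n → ℝ) := fun q => S q.1 s0 q.2 with hFdef
  have hF : ContDiff ℝ 2 F := hSsmooth
  -- Step A : S 0 s0 t = s0 for all t
  have hflow0 : ∀ t, HasDerivAt (S 0 s0) (μ (S 0 s0 t)) t := by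
    intro t; simpa using hflow 0 t
  have hfc : Continuous (S 0 s0) := by
    have : Differentiable ℝ (S 0 s0) := fun t => (hflow0 t).differentiableAt
    exact this.continuous
  have hconst : ∀ t, S 0 s0 t = s0 := by
    have hclopen : IsClopen {t : ℝ | S 0 s0 t = s0} := by
      constructor
      · exact isClosed_eq hfc continuous_const
      · rw [isOpen_iff_mem_nhds]
        intro t0 ht0
        simp only [mem_setOf_eq] at ht0
        obtain ⟨K, U, hU, hlip⟩ := (hμ.contDiffAt (x := s0)).exists_lipschitzOnWith
        have heq : S 0 s0 =ᶠ[nhds t0] (fun _ => s0) := by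
          apply ODE_solution_unique_of_eventually (v := fun _ x => μ x) (s := fun _ => U)
            (K := K) (Filter.Eventually.of_forall fun _ => hlip)
          · have hU' : U ∈ nhds (S 0 s0 t0) := by rw [ht0]; exact hU
            have hmem : ∀ᶠ t in nhds t0, S 0 s0 t ∈ U :=
              hfc.continuousAt.eventually_mem hU'
            filter_upwards [hmem] with t ht using ⟨hflow0 t, ht⟩
          · refine Filter.Eventually.of_forall fun t => ⟨?_, mem_of_mem_nhds hU⟩
            simp only [hfix]
            exact hasDerivAt_const t s0
          · exact ht0
        filter_upwards [heq] with t ht using ht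
    have huniv := hclopen.eq_univ ⟨0, hS0 0 s0⟩
    intro t
    have ht : t ∈ {t : ℝ | S 0 s0 t = s0} := huniv ▸ mem_univ t
    exact ht
  have hF0 : ∀ t, F (0, t) = s0 := fun t => hconst t
  -- differentiability setup
  have hFd : Differentiable ℝ F := hF.differentiable two_ne_zero
  have hβderiv : ∀ t β, HasDerivAt (fun β' => S β' s0 t) (fderiv ℝ F (β, t) (1, 0)) β := by
    intro t β
    have h1 : HasDerivAt (fun β' : ℝ => ((β', t) : ℝ × ℝ)) ((1 : ℝ), (0 : ℝ)) β :=
      (hasDerivAt_id β).prodMk (hasDerivAt_const β t)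
    exact (hFd (β, t)).hasFDerivAt.comp_hasDerivAt β h1
  have htderiv : ∀ β t, HasDerivAt (fun t' => S β s0 t') (fderiv ℝ F (β, t) (0, 1)) t := by
    intro β t
    have h1 : HasDerivAt (fun t' : ℝ => ((β, t') : ℝ × ℝ)) ((0 : ℝ), (1 : ℝ)) t :=
      (hasDerivAt_const t β).prodMk (hasDerivAt_id t)
    exact (hFd (β, t)).hasFDerivAt.comp_hasDerivAt t h1
  set G : ℝ × ℝ → (Fin n → ℝ) := fun q => fderiv ℝ F q ((1 : ℝ), (0 : ℝ)) with hGdef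
  set W : ℝ × ℝ → (Fin n → ℝ) := fun q => fderiv ℝ F q ((0 : ℝ), (1 : ℝ)) with hWdef
  set v : ℝ → (Fin n → ℝ) := fun t => G (0, t) with hvdef
  have hveq : (fun t => deriv (fun β => S β s0 t) 0) = v := by
    funext t; exact (hβderiv t 0).deriv
  have hfF : ContDiff ℝ 1 (fderiv ℝ F) := hF.fderiv_right (le_refl 2)
  have hG : ContDiff ℝ 1 G := hfF.clm_apply contDiff_const
  have hW : ContDiff ℝ 1 W := hfF.clm_apply contDiff_const
  -- W q = μ (F q) - q.1 • g (F q)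
  have hWeq : ∀ q : ℝ × ℝ, W q = μ (F q) - q.1 • g (F q) := by
    rintro ⟨β, t⟩
    exact (htderiv β t).unique (hflow β t)
  -- v 0 = 0
  have hv0 : v 0 = 0 := by
    have hcf : (fun β => S β s0 0) = fun _ : ℝ => s0 := funext fun β => hS0 β s0
    have h0 := hβderiv 0 0
    rw [hcf] at h0
    have h1 := h0.unique (hasDerivAt_const 0 s0)
    simpa [hvdef, hGdef] using h1
  -- symmetry of second derivative
  have hsymm : ∀ t, IsSymmSndFDerivAt ℝ F (0, t) := fun t =>
    (hF.contDiffAt).isSymmSndFDerivAt (by simp)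
  set A : (Fin n → ℝ) →L[ℝ] (Fin n → ℝ) := fderiv ℝ μ s0 with hAdef
  have hg1 : ContDiff ℝ 1 g := by
    rw [hgdef]
    exact contDiff_pi.mpr fun i =>
      (hC.fderiv_right (le_refl 2)).clm_apply (contDiff_const (c := Pi.single i 1))
  have hvderiv : ∀ t, HasDerivAt v (A (v t) - g s0) t := by
    intro t
    have hGd := (hG.differentiable one_ne_zero) (0, t)
    have h1 : HasDerivAt v (fderiv ℝ G (0, t) ((0 : ℝ), (1 : ℝ))) t := by
      have hp : HasDerivAt (fun t' : ℝ => ((0, t') : ℝ × ℝ)) ((0 : ℝ), (1 : ℝ)) t :=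
        (hasDerivAt_const t (0 : ℝ)).prodMk (hasDerivAt_id t)
      exact hGd.hasFDerivAt.comp_hasDerivAt t hp
    have hffd : DifferentiableAt ℝ (fderiv ℝ F) (0, t) := (hfF.differentiable one_ne_zero) (0, t)
    have hGfd : ∀ w : ℝ × ℝ,
        fderiv ℝ G (0, t) w = fderiv ℝ (fderiv ℝ F) (0, t) w ((1 : ℝ), (0 : ℝ)) := by
      intro w
      rw [hGdef]
      rw [fderiv_clm_apply hffd (differentiableAt_const _)]
      simp
    have hWfd : ∀ w : ℝ × ℝ,
        fderiv ℝ W (0, t) w = fderiv ℝ (fderiv ℝ F) (0, t) w ((0 : ℝ), (1 : ℝ)) := by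
      intro w
      rw [hWdef]
      rw [fderiv_clm_apply hffd (differentiableAt_const _)]
      simp
    have hWd := (hW.differentiable one_ne_zero) (0, t)
    have h2 : HasDerivAt (fun β => W (β, t)) (fderiv ℝ W (0, t) ((1 : ℝ), (0 : ℝ))) 0 := by
      have hp : HasDerivAt (fun β : ℝ => ((β, t) : ℝ × ℝ)) ((1 : ℝ), (0 : ℝ)) 0 :=
        (hasDerivAt_id 0).prodMk (hasDerivAt_const 0 t)
      exact hWd.hasFDerivAt.comp_hasDerivAt 0 hp
    have h3 : HasDerivAt (fun β : ℝ => μ (F (β, t)) - β • g (F (β, t))) (A (v t) - g s0) 0 := by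
      have hβF : HasDerivAt (fun β : ℝ => F (β, t)) (v t) 0 := hβderiv t 0
      have hμF : HasDerivAt (fun β : ℝ => μ (F (β, t))) (A (v t)) 0 := by
        have h := ((hμ.differentiable one_ne_zero) (F (0, t))).hasFDerivAt.comp_hasDerivAt 0 hβF
        rw [hF0 t] at h
        exact h
      have hgF : HasDerivAt (fun β : ℝ => g (F (β, t))) (fderiv ℝ g s0 (v t)) 0 := by
        have h := ((hg1.differentiable one_ne_zero) (F (0, t))).hasFDerivAt.comp_hasDerivAt 0 hβF
        rw [hF0 t] at h
        exact h
      have hsm : HasDerivAt (fun β : ℝ => β • g (F (β, t)))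
          ((0 : ℝ) • fderiv ℝ g s0 (v t) + (1 : ℝ) • g (F (0, t))) 0 :=
        (hasDerivAt_id 0).smul hgF
      have hsm' : HasDerivAt (fun β : ℝ => β • g (F (β, t))) (g s0) 0 := by
        simpa [hF0 t] using hsm
      exact hμF.sub hsm'
    have hfun : (fun β : ℝ => W (β, t)) = fun β : ℝ => μ (F (β, t)) - β • g (F (β, t)) := by
      funext β; exact hWeq (β, t)
    have h4 : fderiv ℝ W (0, t) ((1 : ℝ), (0 : ℝ)) = A (v t) - g s0 := by
      rw [hfun] at h2; exact h2.unique h3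
    have h5 : fderiv ℝ G (0, t) ((0 : ℝ), (1 : ℝ)) = A (v t) - g s0 := by
      rw [hGfd, hsymm t ((0 : ℝ), (1 : ℝ)) ((1 : ℝ), (0 : ℝ)), ← hWfd, h4]
    rwa [h5] at h1
  have hderiv_v : ∀ t, deriv v t = A (v t) - g s0 := fun t => (hvderiv t).deriv
  rw [hveq]
  constructor
  · rw [hderiv_v 0, hv0, map_zero, zero_sub, neg_neg]
  · intro t
    have hfun2 : (fun t' => -(deriv v t')) = fun t' => g s0 - A (v t') := by
      funext t'; rw [hderiv_v t']; abel
    rw [hfun2, hderiv_v t]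
    have hA : HasDerivAt (fun t' => A (v t')) (A (A (v t) - g s0)) t :=
      A.hasFDerivAt.comp_hasDerivAt t (hvderiv t)
    rw [map_neg]
    exact hA.const_sub (g s0)
end
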